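/- For every cycle C_k with k ≥ 4, the cutset hypergraph of C_k is 2-summable; consequently C_k is not connected-domishold. -/

import Mathlib

open SimpleGraph Finset BigOperators

variable {V : Type*} [Fintype V] [DecidableEq V]

/-- `S` is a connected dominating set of `G`: every vertex is in `S` or has a neighbor in `S`,
and any two vertices of `S` are joined by a walk staying inside `S`
(i.e. `S` induces a connected subgraph). -/
def SimpleGraph.IsCDSet (G : SimpleGraph V) (S : Finset V) : Prop :=
  (∀ v : V, v ∈ S ∨ ∃ u ∈ S, G.Adj u v) ∧
  ∀ u ∈ S, ∀ v ∈ S, ∃ p : G.Walk u v, ∀ x ∈ p.support, x ∈ S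

/-- `(w, t)` is a connected-domishold structure of `G`. -/
def SimpleGraph.IsCDStructure (G : SimpleGraph V) (w : V → ℝ) (t : ℝ) : Prop :=
  (∀ v, 0 ≤ w v) ∧ 0 ≤ t ∧ ∀ S : Finset V, (t ≤ ∑ x ∈ S, w x) ↔ G.IsCDSet S

/-- `G` is connected-domishold. -/
def SimpleGraph.ConnectedDomishold (G : SimpleGraph V) : Prop :=
  ∃ (w : V → ℝ) (t : ℝ), G.IsCDStructure w t

/-- `S` is a cutset of `G`: `G - S` is disconnected, i.e. there exist two vertices outside `S`
such that every walk between them meets `S`. -/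
def SimpleGraph.IsCutset (G : SimpleGraph V) (S : Finset V) : Prop :=
  ∃ u v : V, u ∉ S ∧ v ∉ S ∧ u ≠ v ∧ ∀ p : G.Walk u v, ∃ x ∈ p.support, x ∈ S

/-- `S` is a minimal cutset of `G`. -/
def SimpleGraph.IsMinCutset (G : SimpleGraph V) (S : Finset V) : Prop :=
  G.IsCutset S ∧ ∀ S' ⊆ S, G.IsCutset S' → S' = S

/-- A hypergraph on vertex set `V`, given by its hyperedge predicate `Eh`, is threshold. -/
def HypThreshold (Eh : Finset V → Prop) : Prop :=
  ∃ (w : V → ℝ) (t : ℝ), (∀ v, 0 ≤ w v) ∧ 0 ≤ t ∧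
    ∀ X : Finset V, (∑ v ∈ X, w v ≤ t) ↔ ∀ e, Eh e → ¬ e ⊆ X

def HypOneSperner (Eh : Finset V → Prop) : Prop :=
  ∀ e f, Eh e → Eh f → e ≠ f → min (e \ f).card (f \ e).card = 1

def HypTwoSummable (Eh : Finset V → Prop) : Prop :=
  ∃ A₁ A₂ B₁ B₂ : Finset V,
    (∃ e, Eh e ∧ e ⊆ A₁) ∧ (∃ e, Eh e ∧ e ⊆ A₂) ∧
    (∀ e, Eh e → ¬ e ⊆ B₁) ∧ (∀ e, Eh e → ¬ e ⊆ B₂) ∧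
    ∀ v : V, ((if v ∈ A₁ then 1 else 0) + (if v ∈ A₂ then 1 else 0) : ℕ)
           = (if v ∈ B₁ then 1 else 0) + (if v ∈ B₂ then 1 else 0)

open scoped Fin.IntCast Fin.NatCast Fin.CommRing

variable {m : ℕ}

lemma fin_cast_eq_zero {s : ℕ} (hs : s < m + 4) : ((s : Fin (m+4)) = 0) ↔ s = 0 := by
  rw [Fin.ext_iff, Fin.val_natCast]
  simp [Nat.mod_eq_of_lt hs]

lemma cg_adj {u v : Fin (m+4)} : (cycleGraph (m+4)).Adj u v ↔ u = v + 1 ∨ v = u + 1 := by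
  have h : (cycleGraph (m+2+2)).Adj u v ↔ u - v = 1 ∨ v - u = 1 := cycleGraph_adj
  rw [h, sub_eq_iff_eq_add, sub_eq_iff_eq_add, add_comm v 1, add_comm u 1]

lemma cg_step (x : Fin (m+4)) : (cycleGraph (m+4)).Adj x (x + 1) := cg_adj.2 (Or.inr rfl)

lemma arcWalk (a : Fin (m+4)) (n : ℕ) :
    ∃ p : (cycleGraph (m+4)).Walk a (a + (n : Fin (m+4))),
      ∀ x ∈ p.support, ∃ s : ℕ, s ≤ n ∧ x = a + (s : Fin (m+4)) := by
  induction n with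
  | zero =>
    refine ⟨(Walk.nil' a).copy rfl (by simp), ?_⟩
    intro x hx
    simp only [Walk.support_copy, Walk.support_nil, List.mem_singleton] at hx
    exact ⟨0, le_rfl, by simp [hx]⟩
  | succ n ih =>
    obtain ⟨p, hp⟩ := ih
    have hadj : (cycleGraph (m+4)).Adj (a + (n : Fin (m+4))) (a + ((n+1 : ℕ) : Fin (m+4))) := by
      have : ((n+1 : ℕ) : Fin (m+4)) = (n : Fin (m+4)) + 1 := by push_cast; ring
      rw [this, ← add_assoc]
      exact cg_step _
    refine ⟨p.concat hadj, ?_⟩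
    intro x hx
    rw [Walk.support_concat, List.mem_append] at hx
    rcases hx with hx | hx
    · obtain ⟨s, hs, rfl⟩ := hp x hx
      exact ⟨s, Nat.le_succ_of_le hs, rfl⟩
    · simp only [List.mem_singleton] at hx
      exact ⟨n+1, le_rfl, hx⟩

/-- Walk between `a + i` and `a + j` staying on the arc. -/
lemma arcWalk₂ (a : Fin (m+4)) (i j : ℕ) (hij : i ≤ j) :
    ∃ p : (cycleGraph (m+4)).Walk (a + (i : Fin (m+4))) (a + (j : Fin (m+4))),
      ∀ x ∈ p.support, ∃ s : ℕ, i ≤ s ∧ s ≤ j ∧ x = a + (s : Fin (m+4)) := by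
  obtain ⟨p, hp⟩ := arcWalk (a + (i : Fin (m+4))) (j - i)
  have hji : a + (i : Fin (m+4)) + ((j - i : ℕ) : Fin (m+4)) = a + (j : Fin (m+4)) := by
    rw [add_assoc]
    congr 1
    rw [← Nat.cast_add, Nat.add_sub_cancel' hij]
  refine ⟨p.copy rfl hji, ?_⟩
  intro x hx
  rw [Walk.support_copy] at hx
  obtain ⟨s, hs, rfl⟩ := hp x hx
  exact ⟨i + s, Nat.le_add_right _ _, by omega, by rw [add_assoc, ← Nat.cast_add]⟩

lemma walk_avoid_aux (a : Fin (m+4)) (N : ℕ) (hN : N ≤ m + 3) (u v : Fin (m+4))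
    (hu1 : 1 ≤ (u - a).val) (hu2 : (u - a).val ≤ N)
    (hv1 : 1 ≤ (v - a).val) (hv2 : (v - a).val ≤ N)
    (huv : (u - a).val ≤ (v - a).val) :
    ∃ p : (cycleGraph (m+4)).Walk u v,
      ∀ x ∈ p.support, 1 ≤ (x - a).val ∧ (x - a).val ≤ N := by
  obtain ⟨p, hp⟩ := arcWalk₂ a (u - a).val (v - a).val huv
  have hcu : a + (((u - a).val : ℕ) : Fin (m+4)) = u := by
    rw [Fin.cast_val_eq_self]; ring
  have hcv : a + (((v - a).val : ℕ) : Fin (m+4)) = v := by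
    rw [Fin.cast_val_eq_self]; ring
  refine ⟨p.copy hcu hcv, ?_⟩
  intro x hx
  rw [Walk.support_copy] at hx
  obtain ⟨s, hs1, hs2, rfl⟩ := hp x hx
  have hsN : s ≤ N := le_trans hs2 hv2
  have hval : (a + (s : Fin (m+4)) - a).val = s := by
    rw [add_sub_cancel_left, Fin.val_natCast, Nat.mod_eq_of_lt (by omega)]
  rw [hval]
  exact ⟨le_trans hu1 hs1, hsN⟩

lemma walk_avoid (a : Fin (m+4)) (N : ℕ) (hN : N ≤ m + 3) (u v : Fin (m+4))
    (hu1 : 1 ≤ (u - a).val) (hu2 : (u - a).val ≤ N)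
    (hv1 : 1 ≤ (v - a).val) (hv2 : (v - a).val ≤ N) :
    ∃ p : (cycleGraph (m+4)).Walk u v,
      ∀ x ∈ p.support, 1 ≤ (x - a).val ∧ (x - a).val ≤ N := by
  rcases le_total (u - a).val (v - a).val with h | h
  · exact walk_avoid_aux a N hN u v hu1 hu2 hv1 hv2 h
  · obtain ⟨p, hp⟩ := walk_avoid_aux a N hN v u hv1 hv2 hu1 hu2 h
    exact ⟨p.reverse, fun x hx => hp x (by rwa [Walk.support_reverse, List.mem_reverse] at hx)⟩

lemma val_neg_one : ((-1 : Fin (m+4))).val = m + 3 := by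
  have h : ((m+3 : ℕ) : Fin (m+4)) + 1 = 0 := by
    have : ((m+3 : ℕ) : Fin (m+4)) + 1 = ((m+4 : ℕ) : Fin (m+4)) := by push_cast; ring
    rw [this, Fin.natCast_self]
  have h2 : (-1 : Fin (m+4)) = ((m+3 : ℕ) : Fin (m+4)) := (neg_eq_of_add_eq_zero_left h).symm
  rw [h2, Fin.val_natCast, Nat.mod_eq_of_lt (by omega)]

lemma sub_val_le {u c : Fin (m+4)} : (u - c).val ≤ m + 3 :=
  Nat.lt_succ_iff.mp (u - c).isLt

lemma sub_val_pos {u c : Fin (m+4)} (h : u ≠ c) : 1 ≤ (u - c).val := by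
  have h0 : u - c ≠ 0 := sub_ne_zero_of_ne h
  have h1 : (u - c).val ≠ 0 := fun hc => h0 (by exact Fin.ext hc)
  omega

lemma avoidOne (c u v : Fin (m+4)) (hu : u ≠ c) (hv : v ≠ c) :
    ∃ p : (cycleGraph (m+4)).Walk u v, ∀ x ∈ p.support, x ≠ c := by
  obtain ⟨p, hp⟩ := walk_avoid c (m+3) le_rfl u v (sub_val_pos hu) sub_val_le
    (sub_val_pos hv) sub_val_le
  refine ⟨p, fun x hx hxc => ?_⟩
  have := (hp x hx).1
  rw [hxc, sub_self] at this
  simp at this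

lemma sub_val_lt {u a : Fin (m+4)} (h1 : u ≠ a) : (u - (a+1)).val ≤ m + 2 := by
  have hne : u - (a+1) ≠ -1 := by
    intro h
    apply h1
    have := sub_eq_iff_eq_add.mp h
    rw [this]; ring
  have : (u - (a+1)).val ≠ m + 3 := by
    intro h
    apply hne
    apply Fin.val_injective
    rw [h, val_neg_one]
  have := @sub_val_le m u (a+1)
  omega

lemma avoidTwo (a u v : Fin (m+4)) (hu1 : u ≠ a) (hu2 : u ≠ a + 1)
    (hv1 : v ≠ a) (hv2 : v ≠ a + 1) :
    ∃ p : (cycleGraph (m+4)).Walk u v, ∀ x ∈ p.support, x ≠ a ∧ x ≠ a + 1 := by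
  obtain ⟨p, hp⟩ := walk_avoid (a+1) (m+2) (by omega) u v
    (sub_val_pos hu2) (sub_val_lt hu1) (sub_val_pos hv2) (sub_val_lt hv1)
  refine ⟨p, fun x hx => ?_⟩
  obtain ⟨h1, h2⟩ := hp x hx
  constructor
  · intro hxa
    rw [hxa] at h2
    have : a - (a+1) = -1 := by ring
    rw [this, val_neg_one] at h2
    omega
  · intro hxa
    rw [hxa, sub_self] at h1
    simp at h1

lemma nbr {u x : Fin (m+4)} (h : (cycleGraph (m+4)).Adj u x) : x = u - 1 ∨ x = u + 1 := by
  rcases cg_adj.mp h with h | h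
  · left; rw [h]; ring
  · right; exact h

lemma walk_through (a : Fin (m+4)) {v : Fin (m+4)} (hv : a ≠ v)
    (p : (cycleGraph (m+4)).Walk a v) :
    ∃ x ∈ p.support, x = a - 1 ∨ x = a + 1 := by
  obtain ⟨x, hadj, q, rfl⟩ := Walk.not_nil_iff.mp (Walk.not_nil_of_ne (p := p) hv)
  exact ⟨x, by simp [Walk.support_cons, q.start_mem_support], nbr hadj⟩

lemma walk_exists (u v : Fin (m+4)) : Nonempty ((cycleGraph (m+4)).Walk u v) := by
  rcases eq_or_ne u v with rfl | hne
  · exact ⟨Walk.nil⟩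
  · rcases eq_or_ne v (u+1) with rfl | hv
    · exact ⟨Walk.cons (cg_step u) Walk.nil⟩
    · have h1 : (1 : Fin (m+4)) ≠ 0 := by
        rw [show (1 : Fin (m+4)) = ((1:ℕ) : Fin (m+4)) by push_cast; rfl,
          Ne, fin_cast_eq_zero (by omega)]; omega
      obtain ⟨p, _⟩ := avoidOne (u+1) u v (fun h => h1 (by linear_combination -h)) hv
      exact ⟨p⟩

lemma not_cutset_subset_singleton (c : Fin (m+4)) (S : Finset (Fin (m+4)))
    (hS : S ⊆ {c}) : ¬ (cycleGraph (m+4)).IsCutset S := by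
  rintro ⟨u, v, hu, hv, hne, hall⟩
  by_cases hc : c ∈ S
  · have hu' : u ≠ c := fun h => hu (h ▸ hc)
    have hv' : v ≠ c := fun h => hv (h ▸ hc)
    obtain ⟨p, hp⟩ := avoidOne c u v hu' hv'
    obtain ⟨x, hx, hxS⟩ := hall p
    exact hp x hx (Finset.mem_singleton.mp (hS hxS))
  · obtain ⟨p⟩ := walk_exists u v
    obtain ⟨x, _, hxS⟩ := hall p
    exact hc (Finset.mem_singleton.mp (hS hxS) ▸ hxS)

lemma not_cutset_subset_pair (a : Fin (m+4)) (S : Finset (Fin (m+4)))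
    (hS : S ⊆ {a, a+1}) : ¬ (cycleGraph (m+4)).IsCutset S := by
  by_cases ha : a ∈ S
  · by_cases hb : a + 1 ∈ S
    · rintro ⟨u, v, hu, hv, hne, hall⟩
      have hu1 : u ≠ a := fun h => hu (h ▸ ha)
      have hu2 : u ≠ a + 1 := fun h => hu (h ▸ hb)
      have hv1 : v ≠ a := fun h => hv (h ▸ ha)
      have hv2 : v ≠ a + 1 := fun h => hv (h ▸ hb)
      obtain ⟨p, hp⟩ := avoidTwo a u v hu1 hu2 hv1 hv2
      obtain ⟨x, hx, hxS⟩ := hall p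
      rcases Finset.mem_insert.mp (hS hxS) with h | h
      · exact (hp x hx).1 h
      · exact (hp x hx).2 (Finset.mem_singleton.mp h)
    · refine not_cutset_subset_singleton a S (fun x hx => ?_)
      rcases Finset.mem_insert.mp (hS hx) with h | h
      · exact Finset.mem_singleton.mpr h
      · exact absurd (Finset.mem_singleton.mp h ▸ hx) hb
  · refine not_cutset_subset_singleton (a+1) S (fun x hx => ?_)
    rcases Finset.mem_insert.mp (hS hx) with h | h
    · exact absurd (h ▸ hx) ha
    · exact h

lemma one_ne (m : ℕ) : (1 : Fin (m+4)) ≠ 0 := by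
  rw [show (1 : Fin (m+4)) = ((1:ℕ) : Fin (m+4)) by push_cast; rfl,
    Ne, fin_cast_eq_zero (by omega)]; omega

lemma two_ne (m : ℕ) : (1 + 1 : Fin (m+4)) ≠ 0 := by
  rw [show (1 + 1 : Fin (m+4)) = ((2:ℕ) : Fin (m+4)) by push_cast; ring,
    Ne, fin_cast_eq_zero (by omega)]; omega

lemma three_ne (m : ℕ) : (1 + 1 + 1 : Fin (m+4)) ≠ 0 := by
  rw [show (1 + 1 + 1 : Fin (m+4)) = ((3:ℕ) : Fin (m+4)) by push_cast; ring,
    Ne, fin_cast_eq_zero (by omega)]; omega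

section Dist
variable (a : Fin (m+4))

lemma dist1 : a - 1 ≠ a := fun h => one_ne m (by linear_combination -h)
lemma dist2 : a - 1 ≠ a + 1 := fun h => two_ne m (by linear_combination -h)
lemma dist3 : a - 1 ≠ a + 1 + 1 := fun h => three_ne m (by linear_combination -h)
lemma dist4 : a ≠ a + 1 := fun h => one_ne m (by linear_combination -h)
lemma dist5 : a ≠ a + 1 + 1 := fun h => two_ne m (by linear_combination -h)
lemma dist6 : a + 1 ≠ a + 1 + 1 := fun h => one_ne m (by linear_combination -h)

lemma cutset_pair : (cycleGraph (m+4)).IsCutset {a - 1, a + 1} := by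
  refine ⟨a, a + 1 + 1, ?_, ?_, dist5 a, ?_⟩
  · simp only [Finset.mem_insert, Finset.mem_singleton, not_or]
    exact ⟨fun h => dist1 a h.symm, fun h => dist4 a h⟩
  · simp only [Finset.mem_insert, Finset.mem_singleton, not_or]
    exact ⟨fun h => dist3 a h.symm, fun h => dist6 a h.symm⟩
  · intro p
    obtain ⟨x, hx, hx2⟩ := walk_through a (dist5 a) p
    refine ⟨x, hx, ?_⟩
    simp only [Finset.mem_insert, Finset.mem_singleton]
    exact hx2

lemma minCutset_pair : (cycleGraph (m+4)).IsMinCutset {a - 1, a + 1} := by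
  refine ⟨cutset_pair a, fun S' hS' hcut => ?_⟩
  have h1 : a - 1 ∈ S' := by
    by_contra h
    refine not_cutset_subset_pair a S' (fun x hx => ?_) hcut
    rcases Finset.mem_insert.mp (hS' hx) with h' | h'
    · exact absurd (h' ▸ hx) h
    · rw [Finset.mem_singleton] at h'
      exact Finset.mem_insert_of_mem (h' ▸ Finset.mem_singleton_self _)
  have h2 : a + 1 ∈ S' := by
    by_contra h
    refine not_cutset_subset_pair (a - 1) S' (fun x hx => ?_) hcut
    rcases Finset.mem_insert.mp (hS' hx) with h' | h'
    · exact h' ▸ Finset.mem_insert_self _ _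
    · rw [Finset.mem_singleton] at h'
      exact absurd (h' ▸ hx) h
  refine Finset.Subset.antisymm hS' (fun x hx => ?_)
  rcases Finset.mem_insert.mp hx with h' | h'
  · exact h' ▸ h1
  · rw [Finset.mem_singleton] at h'
    exact h' ▸ h2

lemma cd_compl_pair : (cycleGraph (m+4)).IsCDSet (Finset.univ \ {a, a + 1}) := by
  constructor
  · intro v
    by_cases h1 : v = a
    · refine Or.inr ⟨a - 1, ?_, ?_⟩
      · simp only [Finset.mem_sdiff, Finset.mem_univ, Finset.mem_insert,
          Finset.mem_singleton, not_or, true_and]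
        exact ⟨dist1 a, dist2 a⟩
      · subst h1
        exact cg_adj.mpr (Or.inr (by ring))
    · by_cases h2 : v = a + 1
      · refine Or.inr ⟨a + 1 + 1, ?_, ?_⟩
        · simp only [Finset.mem_sdiff, Finset.mem_univ, Finset.mem_insert,
            Finset.mem_singleton, not_or, true_and]
          exact ⟨fun h => dist5 a h.symm, fun h => dist6 a h.symm⟩
        · subst h2
          exact cg_adj.mpr (Or.inl rfl)
      · exact Or.inl (by simp [Finset.mem_sdiff, h1, h2])
  · intro u hu v hv
    simp only [Finset.mem_sdiff, Finset.mem_univ, Finset.mem_insert,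
      Finset.mem_singleton, not_or, true_and] at hu hv
    obtain ⟨p, hp⟩ := avoidTwo a u v hu.1 hu.2 hv.1 hv.2
    refine ⟨p, fun x hx => ?_⟩
    simp only [Finset.mem_sdiff, Finset.mem_univ, Finset.mem_insert,
      Finset.mem_singleton, not_or, true_and]
    exact hp x hx

lemma not_cd_compl : ¬ (cycleGraph (m+4)).IsCDSet (Finset.univ \ {a - 1, a + 1}) := by
  rintro ⟨-, hconn⟩
  have ha : a ∈ Finset.univ \ ({a - 1, a + 1} : Finset (Fin (m+4))) := by
    simp only [Finset.mem_sdiff, Finset.mem_univ, Finset.mem_insert,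
      Finset.mem_singleton, not_or, true_and]
    exact ⟨fun h => dist1 a h.symm, dist4 a⟩
  have hb : a + 1 + 1 ∈ Finset.univ \ ({a - 1, a + 1} : Finset (Fin (m+4))) := by
    simp only [Finset.mem_sdiff, Finset.mem_univ, Finset.mem_insert,
      Finset.mem_singleton, not_or, true_and]
    exact ⟨fun h => dist3 a h.symm, fun h => dist6 a h.symm⟩
  obtain ⟨p, hp⟩ := hconn a ha (a + 1 + 1) hb
  obtain ⟨x, hx, hx2⟩ := walk_through a (dist5 a) p
  have := hp x hx
  simp only [Finset.mem_sdiff, Finset.mem_univ, Finset.mem_insert,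
    Finset.mem_singleton, not_or, true_and] at this
  rcases hx2 with h | h
  · exact this.1 h
  · exact this.2 h

end Dist

/-- For every cycle `C_k` with `k ≥ 4`, the cutset hypergraph of `C_k` is 2-summable;
consequently `C_k` is not connected-domishold. -/
theorem cycle_cutsetHypergraph_two_summable (k : ℕ) (hk : 4 ≤ k) :
    HypTwoSummable ((SimpleGraph.cycleGraph k).IsMinCutset) ∧
    ¬ (SimpleGraph.cycleGraph k).ConnectedDomishold := by
  obtain ⟨m, rfl⟩ : ∃ m, k = m + 4 := ⟨k - 4, by omega⟩
  set a : Fin (m+4) := 0 with ha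
  set A₁ : Finset (Fin (m+4)) := {a - 1, a + 1} with hA₁
  set A₂ : Finset (Fin (m+4)) := {a, a + 1 + 1} with hA₂
  set B₁ : Finset (Fin (m+4)) := {a - 1, a} with hB₁
  set B₂ : Finset (Fin (m+4)) := {a + 1, a + 1 + 1} with hB₂
  have hA₂eq : A₂ = {(a+1) - 1, (a+1) + 1} := by
    rw [hA₂, show (a+1) - 1 = a from by ring]
  have hB₁eq : B₁ = {a - 1, (a-1) + 1} := by
    rw [hB₁, show (a-1) + 1 = a from by ring]
  have d1 := dist1 a
  have d2 := dist2 a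
  have d3 := dist3 a
  have d4 := dist4 a
  have d5 := dist5 a
  have d6 := dist6 a
  have e1 : a ≠ a - 1 := fun h => d1 h.symm
  have e2 : a + 1 ≠ a - 1 := fun h => d2 h.symm
  have e3 : a + 1 + 1 ≠ a - 1 := fun h => d3 h.symm
  have e4 : a + 1 ≠ a := fun h => d4 h.symm
  have e5 : a + 1 + 1 ≠ a := fun h => d5 h.symm
  have e6 : a + 1 + 1 ≠ a + 1 := fun h => d6 h.symm
  have hU : A₁ ∪ A₂ = B₁ ∪ B₂ := by
    ext x
    simp only [hA₁, hA₂, hB₁, hB₂, Finset.mem_union, Finset.mem_insert, Finset.mem_singleton]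
    tauto
  have dA : Disjoint A₁ A₂ := by
    rw [Finset.disjoint_left]
    intro x hx hx2
    simp only [hA₁, hA₂, Finset.mem_insert, Finset.mem_singleton] at hx hx2
    rcases hx with rfl | rfl <;> rcases hx2 with h | h
    · exact d1 h
    · exact d3 h
    · exact d4 h.symm
    · exact d6 h
  have dB : Disjoint B₁ B₂ := by
    rw [Finset.disjoint_left]
    intro x hx hx2
    simp only [hB₁, hB₂, Finset.mem_insert, Finset.mem_singleton] at hx hx2
    rcases hx with rfl | rfl <;> rcases hx2 with h | h
    · exact d2 h
    · exact d3 h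
    · exact d4 h
    · exact d5 h
  constructor
  · refine ⟨A₁, A₂, B₁, B₂, ⟨A₁, minCutset_pair a, subset_rfl⟩,
      ⟨A₂, hA₂eq ▸ minCutset_pair (a+1), subset_rfl⟩, ?_, ?_, ?_⟩
    · intro e he hsub
      exact not_cutset_subset_pair (a-1) e (hB₁eq ▸ hsub) he.1
    · intro e he hsub
      exact not_cutset_subset_pair (a+1) e hsub he.1
    · intro v
      by_cases h1 : v = a - 1
      · subst h1
        simp [hA₁, hA₂, hB₁, hB₂, d1, d2, d3]
      · by_cases h2 : v = a
        · subst h2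
          simp [hA₁, hA₂, hB₁, hB₂, e1, d4, d5]
        · by_cases h3 : v = a + 1
          · subst h3
            simp [hA₁, hA₂, hB₁, hB₂, e2, e4, d6]
          · by_cases h4 : v = a + 1 + 1
            · subst h4
              simp [hA₁, hA₂, hB₁, hB₂, e3, e5, e6]
            · simp [hA₁, hA₂, hB₁, hB₂, h1, h2, h3, h4]
  · rintro ⟨w, t, hw, ht, hiff⟩
    have hlt1 : ∑ x ∈ Finset.univ \ A₁, w x < t :=
      not_le.mp (fun h => not_cd_compl a ((hiff _).mp h))
    have hlt2 : ∑ x ∈ Finset.univ \ A₂, w x < t :=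
      not_le.mp (fun h => (hA₂eq ▸ not_cd_compl (a+1)) ((hiff _).mp h))
    have hge1 : t ≤ ∑ x ∈ Finset.univ \ B₁, w x :=
      (hiff _).mpr (hB₁eq ▸ cd_compl_pair (a-1))
    have hge2 : t ≤ ∑ x ∈ Finset.univ \ B₂, w x :=
      (hiff _).mpr (cd_compl_pair (a+1))
    have hsum : ∀ X : Finset (Fin (m+4)),
        ∑ x ∈ Finset.univ \ X, w x = ∑ x ∈ Finset.univ, w x - ∑ x ∈ X, w x :=
      fun X => Finset.sum_sdiff_eq_sub (Finset.subset_univ X)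
    have hAB : ∑ x ∈ A₁, w x + ∑ x ∈ A₂, w x = ∑ x ∈ B₁, w x + ∑ x ∈ B₂, w x := by
      rw [← Finset.sum_union dA, ← Finset.sum_union dB, hU]
    rw [hsum] at hlt1 hlt2 hge1 hge2
    linarith
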